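/- Let η be the probability distribution on ℝ defined as the mixture η = (1−δ)η₀ + δη₁, where η₁ takes values ±λ with probability 1/2 each and η₀ is symmetric with r-th moment ((r−1)!! − δλ^r)/(1−δ) for even 0 ≤ r ≤ s and 0 for odd r. Then for every integer r with 0 ≤ r ≤ s+1, E_{x∼η} x^r = E_{x∼N(0,1)} x^r, and for every even r > s, E_{x∼η} x^r ≥ δλ^r. -/

import Mathlib

open MeasureTheory ProbabilityTheory Real
open scoped ENNReal NNReal

private lemma int_gw (n : ℕ) :
    Integrable fun x : ℝ => x ^ n * rexp (-(2⁻¹ : ℝ) * x ^ 2) := by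
  have := integrable_rpow_mul_exp_neg_mul_sq (b := (2⁻¹ : ℝ)) (by norm_num)
      (s := (n : ℝ)) (lt_of_lt_of_le (by norm_num) (Nat.cast_nonneg n))
  simpa [Real.rpow_natCast] using this

private lemma gw_rec (n : ℕ) :
    ∫ x : ℝ, x ^ (n + 2) * rexp (-(2⁻¹ : ℝ) * x ^ 2)
      = ((n : ℝ) + 1) * ∫ x : ℝ, x ^ n * rexp (-(2⁻¹ : ℝ) * x ^ 2) := by
  have key : ∫ x : ℝ, (((n : ℝ) + 1) * (x ^ n * rexp (-(2⁻¹ : ℝ) * x ^ 2))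
      - x ^ (n + 2) * rexp (-(2⁻¹ : ℝ) * x ^ 2)) = 0 := by
    apply integral_eq_zero_of_hasDerivAt_of_integrable
      (f := fun x : ℝ => x ^ (n + 1) * rexp (-(2⁻¹ : ℝ) * x ^ 2))
    · intro x
      have h1 := hasDerivAt_pow (n + 1) x
      have h0 : HasDerivAt (fun x : ℝ => -(2⁻¹ : ℝ) * x ^ 2) (-(2⁻¹ : ℝ) * (2 * x ^ 1)) x :=
        (hasDerivAt_pow 2 x).const_mul _
      have h2 := h0.exp
      have : HasDerivAt (fun x : ℝ => x ^ (n + 1) * rexp (-(2⁻¹ : ℝ) * x ^ 2)) _ x := h1.mul h2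
      refine this.congr_deriv ?_
      push_cast
      ring
    · exact ((int_gw n).const_mul _).sub (int_gw (n + 2))
    · exact int_gw (n + 1)
  rw [integral_sub ((int_gw n).const_mul _) (int_gw (n + 2)), integral_const_mul] at key
  linarith

private lemma gw_odd {n : ℕ} (hn : Odd n) :
    ∫ x : ℝ, x ^ n * rexp (-(2⁻¹ : ℝ) * x ^ 2) = 0 := by
  have h := (Measure.measurePreserving_neg (volume : Measure ℝ)).integral_comp
      (Homeomorph.neg ℝ).measurableEmbedding
      (fun x : ℝ => x ^ n * rexp (-(2⁻¹ : ℝ) * x ^ 2))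
  simp only [hn.neg_pow, neg_sq, neg_mul, integral_neg] at h
  simp only [neg_mul]
  linarith

private lemma gw_val (r : ℕ) :
    ∫ x : ℝ, x ^ r * rexp (-(2⁻¹ : ℝ) * x ^ 2)
      = (if Odd r then 0 else ((r - 1).doubleFactorial : ℝ)) * Real.sqrt (2 * π) := by
  induction r using Nat.strong_induction_on with
  | _ r ih =>
    match r with
    | 0 =>
      have h := integral_gaussian (2⁻¹ : ℝ)
      rw [show π / 2⁻¹ = 2 * π by ring] at h
      simp only [pow_zero, one_mul]
      rw [h]
      norm_num [Nat.doubleFactorial]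
    | 1 =>
      rw [gw_odd odd_one, if_pos odd_one]
      ring
    | (n + 2) =>
      rw [gw_rec n, ih n (by omega)]
      by_cases hn : Odd n
      · have ho2 : Odd (n + 2) := by
          rcases hn with ⟨k, hk⟩; exact ⟨k + 1, by omega⟩
        rw [if_pos hn, if_pos ho2]
        ring
      · have he2 : ¬ Odd (n + 2) := fun ⟨k, hk⟩ => hn ⟨k - 1, by omega⟩
        rw [if_neg hn, if_neg he2]
        have hdf : ((n + 2 - 1).doubleFactorial : ℝ)
            = ((n : ℝ) + 1) * ((n - 1).doubleFactorial : ℝ) := by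
          match n with
          | 0 => simp [Nat.doubleFactorial]
          | (m + 1) =>
            rw [show m + 1 + 2 - 1 = m + 2 from rfl, show m + 1 - 1 = m from rfl,
              Nat.doubleFactorial_add_two]
            push_cast
            ring
        rw [hdf]
        ring

private lemma integral_gaussianReal01 (f : ℝ → ℝ) :
    ∫ x, f x ∂(gaussianReal 0 1) = ∫ x, gaussianPDFReal 0 1 x * f x := by
  rw [gaussianReal_of_var_ne_zero 0 one_ne_zero]
  rw [show gaussianPDF 0 1 = fun x => ((gaussianPDFReal 0 1 x).toNNReal : ℝ≥0∞) from rfl]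
  rw [integral_withDensity_eq_integral_smul
    ((measurable_gaussianPDFReal 0 1).real_toNNReal) f]
  congr 1
  funext x
  rw [NNReal.smul_def, smul_eq_mul, Real.coe_toNNReal _ (gaussianPDFReal_nonneg 0 1 x)]

private lemma gauss_moment (r : ℕ) :
    ∫ x, x ^ r ∂(gaussianReal 0 1)
      = if Odd r then 0 else ((r - 1).doubleFactorial : ℝ) := by
  rw [integral_gaussianReal01 (fun x => x ^ r)]
  have hpt : ∀ x : ℝ, gaussianPDFReal 0 1 x * x ^ r
      = (Real.sqrt (2 * π))⁻¹ * (x ^ r * rexp (-(2⁻¹ : ℝ) * x ^ 2)) := by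
    intro x
    unfold gaussianPDFReal
    rw [show (2 * π * ((1 : ℝ≥0) : ℝ)) = 2 * π by norm_num,
      show -(x - 0) ^ 2 / (2 * ((1 : ℝ≥0) : ℝ)) = -(2⁻¹ : ℝ) * x ^ 2 by push_cast; ring]
    ring
  simp_rw [hpt]
  rw [integral_const_mul, gw_val r]
  have hs : Real.sqrt (2 * π) ≠ 0 := by positivity
  field_simp

/-- Moments of the mixture `η = (1−δ)η₀ + δη₁` where `η₁` takes values `±λ` with probability
`1/2` each and `η₀` is symmetric with the prescribed moments up to degree `s`: the moments of
`η` match the standard Gaussian moments up to degree `s+1`, and for even `r > s` the `r`-th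
moment of `η` is at least `δ λ^r`. -/
theorem mixture_moments (s : ℕ) (hs2 : 2 ≤ s) (hse : Even s)
    (δ lam : ℝ) (hδ0 : 0 < δ) (hδ1 : δ < 1) (hlam : 2 ≤ lam)
    (η₀ : Measure ℝ) [IsProbabilityMeasure η₀]
    (hint : ∀ r : ℕ, Integrable (fun x => x ^ r) η₀)
    (hsymm : η₀.map (fun x => -x) = η₀)
    (hmoments : ∀ r ≤ s, (∫ x, x ^ r ∂η₀) =
      if Odd r then 0
      else ((Nat.doubleFactorial (r - 1) : ℝ) - δ * lam ^ r) / (1 - δ)) :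
    (∀ r ≤ s + 1,
      (∫ x, x ^ r ∂(ENNReal.ofReal (1 - δ) • η₀ +
          ENNReal.ofReal δ • ((2 : ℝ≥0∞)⁻¹ • Measure.dirac lam +
            (2 : ℝ≥0∞)⁻¹ • Measure.dirac (-lam))))
        = ∫ x, x ^ r ∂(gaussianReal 0 1)) ∧
    (∀ r : ℕ, Even r → s < r →
      δ * lam ^ r ≤
        ∫ x, x ^ r ∂(ENNReal.ofReal (1 - δ) • η₀ +
          ENNReal.ofReal δ • ((2 : ℝ≥0∞)⁻¹ • Measure.dirac lam +
            (2 : ℝ≥0∞)⁻¹ • Measure.dirac (-lam)))) := by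
  have hδ' : (0:ℝ) ≤ 1 - δ := by linarith
  -- the mixture integral formula
  have hmix : ∀ r : ℕ,
      ∫ x, x ^ r ∂(ENNReal.ofReal (1 - δ) • η₀ +
          ENNReal.ofReal δ • ((2 : ℝ≥0∞)⁻¹ • Measure.dirac lam +
            (2 : ℝ≥0∞)⁻¹ • Measure.dirac (-lam)))
        = (1 - δ) * (∫ x, x ^ r ∂η₀) + δ * (2⁻¹ * lam ^ r + 2⁻¹ * (-lam) ^ r) := by
    intro r
    have hd1 : Integrable (fun x : ℝ => x ^ r) (Measure.dirac lam) :=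
      (integrable_const (lam ^ r)).congr (ae_eq_dirac (fun x : ℝ => x ^ r)).symm
    have hd2 : Integrable (fun x : ℝ => x ^ r) (Measure.dirac (-lam)) :=
      (integrable_const ((-lam) ^ r)).congr (ae_eq_dirac (fun x : ℝ => x ^ r)).symm
    have h2ne : ((2 : ℝ≥0∞)⁻¹) ≠ ⊤ := by simp
    have hI1 : Integrable (fun x : ℝ => x ^ r) (ENNReal.ofReal (1 - δ) • η₀) :=
      (hint r).smul_measure ENNReal.ofReal_ne_top
    have hI2 : Integrable (fun x : ℝ => x ^ r)
        (ENNReal.ofReal δ • ((2 : ℝ≥0∞)⁻¹ • Measure.dirac lam +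
          (2 : ℝ≥0∞)⁻¹ • Measure.dirac (-lam))) :=
      ((hd1.smul_measure h2ne).add_measure (hd2.smul_measure h2ne)).smul_measure
        ENNReal.ofReal_ne_top
    rw [integral_add_measure hI1 hI2, integral_smul_measure, integral_smul_measure,
      integral_add_measure (hd1.smul_measure h2ne) (hd2.smul_measure h2ne),
      integral_smul_measure, integral_smul_measure, integral_dirac, integral_dirac,
      ENNReal.toReal_ofReal hδ', ENNReal.toReal_ofReal hδ0.le]
    simp only [smul_eq_mul]
    norm_num
  -- odd moments of η₀ vanish
  have hodd : ∀ r : ℕ, Odd r → (∫ x, x ^ r ∂η₀) = 0 := by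
    intro r hr
    have h : ∫ x, x ^ r ∂(η₀.map (fun x : ℝ => -x)) = ∫ x, x ^ r ∂η₀ := by rw [hsymm]
    have hm : AEStronglyMeasurable (fun x : ℝ => x ^ r) (η₀.map (fun x : ℝ => -x)) :=
      (continuous_pow r).aestronglyMeasurable
    rw [integral_map measurable_neg.aemeasurable hm] at h
    simp only [hr.neg_pow, integral_neg] at h
    linarith
  constructor
  · intro r hr
    rw [hmix r, gauss_moment r]
    by_cases hro : Odd r
    · rw [if_pos hro, hodd r hro, hro.neg_pow]
      ring
    · rw [if_neg hro]
      have hrs : r ≤ s := by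
        rcases Nat.lt_or_ge r (s + 1) with h | h
        · omega
        · exfalso
          have : r = s + 1 := by omega
          rw [this] at hro
          exact hro (Even.add_one hse)
      have he : Even r := Nat.not_odd_iff_even.mp hro
      have h1δ : (1 - δ) ≠ 0 := by linarith
      rw [hmoments r hrs, if_neg hro, he.neg_pow, mul_comm (1 - δ), div_mul_cancel₀ _ h1δ]
      ring
  · intro r hre hrs
    rw [hmix r]
    have h0 : 0 ≤ ∫ x, x ^ r ∂η₀ := integral_nonneg fun x => hre.pow_nonneg x
    have : δ * (2⁻¹ * lam ^ r + 2⁻¹ * (-lam) ^ r) = δ * lam ^ r := by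
      rw [hre.neg_pow]; ring
    rw [this]
    nlinarith [h0, hδ']
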